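/- Let $W \in \mathbb{C}^{l \times n}$ with $WW^*$ having real entries, and define $f_W(g) = \mathrm{tr}((gW)^* gW)$ on $O_l(\mathbb{C})$. Then for $g \in O_l(\mathbb{C})$, $f_W(g) = f_W(e)$ if and only if $g \in O_l(\mathbb{R}) \cdot \mathrm{Stab}(W)$, where $\mathrm{Stab}(W) = \{g \in O_l(\mathbb{C}) \mid gW = W\}$. -/

import Mathlib

open Matrix


theorem euc_sum_apply {l : ℕ} {ι : Type*} (s : Finset ι) (f : ι → EuclideanSpace ℝ (Fin l))
    (k : Fin l) : (∑ x ∈ s, f x) k = ∑ x ∈ s, f x k := by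
  induction s using Finset.cons_induction with
  | empty => rfl
  | cons a s ha ih => rw [Finset.sum_cons, Finset.sum_cons, ← ih]; rfl

theorem gram_dot {l : ℕ} {m : Type*} [Fintype m] (X : Matrix (Fin l) m ℝ) (u v : m → ℝ) :
    (X *ᵥ u) ⬝ᵥ (X *ᵥ v) = u ⬝ᵥ ((Xᵀ * X) *ᵥ v) := by
  rw [Matrix.dotProduct_mulVec, Matrix.dotProduct_mulVec, ← Matrix.vecMul_vecMul,
    Matrix.vecMul_transpose]

theorem exists_orthogonal_of_gram_eq {l : ℕ} {m : Type*} [Fintype m]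
    (X Y : Matrix (Fin l) m ℝ) (h : Xᵀ * X = Yᵀ * Y) :
    ∃ Q : Matrix (Fin l) (Fin l) ℝ, Qᵀ * Q = 1 ∧ Q * X = Y := by
  classical
  let e := WithLp.linearEquiv 2 ℝ (Fin l → ℝ)
  let fX : (m → ℝ) →ₗ[ℝ] EuclideanSpace ℝ (Fin l) := e.symm.toLinearMap ∘ₗ X.mulVecLin
  let fY : (m → ℝ) →ₗ[ℝ] EuclideanSpace ℝ (Fin l) := e.symm.toLinearMap ∘ₗ Y.mulVecLin
  have hinner : ∀ u v, inner ℝ (fX u) (fX v) = inner ℝ (fY u) (fY v) := by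
    intro u v
    rw [PiLp.inner_apply, PiLp.inner_apply]
    simp only [RCLike.inner_apply, starRingEnd_apply, star_trivial]
    show (X *ᵥ v) ⬝ᵥ (X *ᵥ u) = (Y *ᵥ v) ⬝ᵥ (Y *ᵥ u)
    rw [gram_dot, gram_dot, h]
  have hker : LinearMap.ker fX ≤ LinearMap.ker fY := by
    intro u hu
    rw [LinearMap.mem_ker] at hu ⊢
    have : inner ℝ (fY u) (fY u) = 0 := by rw [← hinner, hu, inner_zero_right]
    exact inner_self_eq_zero.mp this
  let L₀ : (LinearMap.range fX) →ₗ[ℝ] EuclideanSpace ℝ (Fin l) :=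
    (Submodule.liftQ (LinearMap.ker fX) fY hker) ∘ₗ
      (LinearMap.quotKerEquivRange fX).symm.toLinearMap
  have hL₀ : ∀ u : m → ℝ, L₀ ⟨fX u, LinearMap.mem_range_self fX u⟩ = fY u := by
    intro u
    have h1 : (LinearMap.quotKerEquivRange fX).symm ⟨fX u, LinearMap.mem_range_self fX u⟩
        = Submodule.Quotient.mk u := by
      rw [LinearEquiv.symm_apply_eq]
      ext
      simp [LinearMap.quotKerEquivRange]
    simp only [L₀, LinearMap.comp_apply, LinearEquiv.coe_toLinearMap, h1,
      Submodule.liftQ_apply]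
  let L : (LinearMap.range fX) →ₗᵢ[ℝ] EuclideanSpace ℝ (Fin l) :=
    L₀.isometryOfInner (by
      rintro ⟨x, u, rfl⟩ ⟨y, v, rfl⟩
      rw [Submodule.coe_inner]
      simp only [hL₀, Submodule.coe_inner]
      rw [← hinner])
  let Lext := L.extend
  let Q : Matrix (Fin l) (Fin l) ℝ :=
    Matrix.of fun i j => Lext (EuclideanSpace.single j (1:ℝ)) i
  have hQv : ∀ v : EuclideanSpace ℝ (Fin l), ∀ i, (Q *ᵥ (fun k => v k)) i = Lext v i := by
    intro v i
    have hv : v = ∑ j, v j • EuclideanSpace.single j (1:ℝ) := by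
      ext k
      rw [euc_sum_apply]
      simp [EuclideanSpace.single_apply]
    calc (Q *ᵥ (fun k => v k)) i = ∑ j, v j • Lext (EuclideanSpace.single j (1:ℝ)) i := by
          simp [Matrix.mulVec, dotProduct, Q, mul_comm, smul_eq_mul]
      _ = Lext v i := by
          conv_rhs => rw [hv]
          rw [map_sum, euc_sum_apply]
          simp
  refine ⟨Q, ?_, ?_⟩
  · ext i j
    have h0 : (Qᵀ * Q) i j = (inner ℝ (Lext (EuclideanSpace.single i (1:ℝ)))
        (Lext (EuclideanSpace.single j (1:ℝ)))) := by
      rw [PiLp.inner_apply]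
      simp [Matrix.mul_apply, Q, RCLike.inner_apply]
      exact Finset.sum_congr rfl fun _ _ => mul_comm _ _
    rw [h0, Lext.inner_map_map, EuclideanSpace.inner_single_left]
    rcases eq_or_ne i j with rfl | hij
    · simp [EuclideanSpace.single_apply]
    · simp [EuclideanSpace.single_apply, Matrix.one_apply, hij, Ne.symm hij]
  · ext i k
    have hcol : (fun r => X r k) = fun r => fX (Pi.single k 1) r := by
      ext r
      show X r k = (X *ᵥ Pi.single k 1) r
      simp [Matrix.mulVec_single]
    have h1 : (Q * X) i k = (Q *ᵥ (fun r => X r k)) i := by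
      simp [Matrix.mul_apply, Matrix.mulVec, dotProduct]
    rw [h1, hcol]
    have h2 := hQv (fX (Pi.single k 1)) i
    rw [h2]
    have h3 : Lext (fX (Pi.single k 1)) = L ⟨fX (Pi.single k 1), LinearMap.mem_range_self _ _⟩ :=
      L.extend_apply ⟨fX (Pi.single k 1), LinearMap.mem_range_self _ _⟩
    rw [h3]
    show (L₀ ⟨fX (Pi.single k 1), _⟩ : EuclideanSpace ℝ (Fin l)) i = Y i k
    rw [hL₀]
    show (Y *ᵥ Pi.single k 1) i = Y i k
    simp [Matrix.mulVec_single]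

theorem trace_hermit_zero {l n : ℕ} (M : Matrix (Fin l) (Fin n) ℂ)
    (h : (Mᴴ * M).trace = 0) : M = 0 := by
  have key : ∑ j, ∑ i, Complex.normSq (M i j) = 0 := by
    have h2 : (Mᴴ * M).trace = ((∑ j, ∑ i, Complex.normSq (M i j) : ℝ) : ℂ) := by
      rw [Matrix.trace]
      push_cast
      refine Finset.sum_congr rfl fun j _ => ?_
      rw [Matrix.diag_apply, Matrix.mul_apply]
      refine Finset.sum_congr rfl fun i _ => ?_
      rw [Matrix.conjTranspose_apply]
      simp [Complex.normSq_eq_conj_mul_self]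
    rw [h] at h2
    exact_mod_cast h2.symm
  ext i j
  have h3 := (Finset.sum_eq_zero_iff_of_nonneg (fun j _ => Finset.sum_nonneg
    (fun i _ => Complex.normSq_nonneg _))).mp key j (Finset.mem_univ j)
  have h4 := (Finset.sum_eq_zero_iff_of_nonneg (fun i _ => Complex.normSq_nonneg _)).mp h3 i
    (Finset.mem_univ i)
  simpa [Complex.normSq_eq_zero] using h4


theorem stageB {l n : ℕ} (W : Matrix (Fin l) (Fin n) ℂ)
    (hW : ∀ i j, ((W * Wᴴ) i j).im = 0)
    (g : Matrix (Fin l) (Fin l) ℂ) (hg : gᵀ * g = 1)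
    (hEq : ((g * W)ᴴ * (g * W)).trace = (Wᴴ * W).trace) :
    (g.map (starRingEnd ℂ) - g) * W = 0 := by
  set σg := g.map (starRingEnd ℂ) with hσg
  set N := σg - g with hN
  have hgH : gᴴ = Nᵀ + gᵀ := by
    ext i j
    simp [hN, hσg, Matrix.conjTranspose_apply, Matrix.map_apply]
  have hdiff : (Wᴴ * Nᵀ * g * W).trace = 0 := by
    have h1 : gᵀ * (g * W) = W := by rw [← Matrix.mul_assoc, hg, Matrix.one_mul]
    have expand : (g * W)ᴴ * (g * W) = Wᴴ * Nᵀ * g * W + Wᴴ * W := by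
      calc (g * W)ᴴ * (g * W) = Wᴴ * ((Nᵀ + gᵀ) * (g * W)) := by
            rw [Matrix.conjTranspose_mul, hgH, Matrix.mul_assoc]
        _ = Wᴴ * (Nᵀ * (g * W)) + Wᴴ * (gᵀ * (g * W)) := by
            rw [Matrix.add_mul, Matrix.mul_add]
        _ = Wᴴ * Nᵀ * g * W + Wᴴ * W := by rw [h1]; simp [Matrix.mul_assoc]
    rw [expand, Matrix.trace_add] at hEq
    linear_combination (norm := ring_nf) hEq
  have hNH : Nᴴ = -Nᵀ := by
    ext i j
    simp [hN, hσg, Matrix.conjTranspose_apply, Matrix.map_apply]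
  apply trace_hermit_zero
  have key : ((N * W)ᴴ * (N * W)).trace =
      (Wᴴ * Nᵀ * g * W).trace + starRingEnd ℂ ((Wᴴ * Nᵀ * g * W).trace) := by
    have hP : W * Wᴴ = W.map (starRingEnd ℂ) * Wᵀ := by
      ext i j
      have h5 : (W.map (starRingEnd ℂ) * Wᵀ) i j = starRingEnd ℂ ((W * Wᴴ) i j) := by
        simp only [Matrix.mul_apply, Matrix.map_apply, Matrix.transpose_apply,
          Matrix.conjTranspose_apply, map_sum]
        refine Finset.sum_congr rfl fun k _ => ?_
        simp [mul_comm]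
      rw [h5, Complex.conj_eq_iff_im.mpr (hW i j)]
    have hσN : Nᵀ.map (starRingEnd ℂ) = -Nᵀ := by
      ext i j
      simp [hN, hσg, Matrix.map_apply]
    have hσWH : Wᴴ.map (starRingEnd ℂ) = Wᵀ := by
      ext i j
      simp [Matrix.conjTranspose_apply, Matrix.map_apply]
    have hconj : starRingEnd ℂ ((Wᴴ * Nᵀ * g * W).trace)
        = -(Wᵀ * Nᵀ * σg * (W.map (starRingEnd ℂ))).trace := by
      have hm : (Wᴴ * Nᵀ * g * W).map (starRingEnd ℂ)
          = Wᵀ * -Nᵀ * σg * (W.map (starRingEnd ℂ)) := by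
        rw [Matrix.map_mul (f := starRingEnd ℂ), Matrix.map_mul (f := starRingEnd ℂ),
          Matrix.map_mul (f := starRingEnd ℂ), hσN, hσWH]
      have ht : ((Wᴴ * Nᵀ * g * W).map (starRingEnd ℂ)).trace
          = starRingEnd ℂ ((Wᴴ * Nᵀ * g * W).trace) := by
        simp [Matrix.trace, Matrix.diag, map_sum]
      rw [← ht, hm]
      simp [Matrix.neg_mul, Matrix.mul_neg]
    have hswap : (Wᴴ * Nᵀ * σg * W).trace = (Wᵀ * Nᵀ * σg * (W.map (starRingEnd ℂ))).trace := by
      rw [Matrix.trace_mul_comm (Wᴴ * Nᵀ * σg) W, Matrix.trace_mul_comm (Wᵀ * Nᵀ * σg)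
        (W.map (starRingEnd ℂ))]
      rw [← Matrix.mul_assoc, ← Matrix.mul_assoc, ← Matrix.mul_assoc, ← Matrix.mul_assoc, hP]
    have hexp : (N * W)ᴴ * (N * W) = Wᴴ * Nᵀ * g * W - Wᴴ * Nᵀ * σg * W := by
      calc (N * W)ᴴ * (N * W) = Wᴴ * (-Nᵀ) * (N * W) := by
            rw [Matrix.conjTranspose_mul, hNH]
        _ = -(Wᴴ * (Nᵀ * ((σg - g) * W))) := by
            rw [← hN]; simp [Matrix.mul_assoc, Matrix.mul_neg, Matrix.neg_mul]
        _ = Wᴴ * Nᵀ * g * W - Wᴴ * Nᵀ * σg * W := by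
            rw [Matrix.sub_mul, Matrix.mul_sub, Matrix.mul_sub]
            simp [Matrix.mul_assoc]
    rw [hexp, Matrix.trace_sub, hswap, hconj]
    ring
  rw [key, hdiff]
  simp

theorem stageC {l n : ℕ} (W : Matrix (Fin l) (Fin n) ℂ)
    (g : Matrix (Fin l) (Fin l) ℂ) (hg : gᵀ * g = 1)
    (hNW : (g.map (starRingEnd ℂ) - g) * W = 0) :
    ∃ g₁ s : Matrix (Fin l) (Fin l) ℂ,
      (∀ i j, (g₁ i j).im = 0) ∧ g₁ᵀ * g₁ = 1 ∧
      sᵀ * s = 1 ∧ s * W = W ∧ g = g₁ * s := by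
  classical
  set Ar : Matrix (Fin l) (Fin l) ℝ := Matrix.of fun i j => (g i j).re with hAr
  set Br : Matrix (Fin l) (Fin l) ℝ := Matrix.of fun i j => (g i j).im with hBr
  set Wr : Matrix (Fin l) (Fin n) ℝ := Matrix.of fun i j => (W i j).re with hWr
  set Wi : Matrix (Fin l) (Fin n) ℝ := Matrix.of fun i j => (W i j).im with hWi
  -- extract Br * Wr = 0 and Br * Wi = 0
  have hentry : ∀ i j, ∑ k, (Br i k : ℂ) * W k j = 0 := by
    intro i j
    have h0 : ((g.map (starRingEnd ℂ) - g) * W) i j = (0 : Matrix (Fin l) (Fin n) ℂ) i j := by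
      rw [hNW]
    simp only [Matrix.mul_apply, Matrix.sub_apply, Matrix.map_apply, Matrix.zero_apply] at h0
    have h1 : ∀ k, (starRingEnd ℂ (g i k) - g i k) * W k j
        = (-2 * Complex.I) * ((Br i k : ℂ) * W k j) := by
      intro k
      have : starRingEnd ℂ (g i k) - g i k = -2 * Complex.I * (Br i k : ℂ) := by
        apply Complex.ext <;> simp [hBr] <;> try ring
      rw [this]; ring
    rw [Finset.sum_congr rfl (fun k _ => h1 k), ← Finset.mul_sum] at h0
    rcases mul_eq_zero.mp h0 with h | h
    · exfalso; simpa [Complex.ext_iff] using h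
    · exact h
  have hBrWr : Br * Wr = 0 := by
    ext i j
    have := congrArg Complex.re (hentry i j)
    simpa [Complex.re_sum, Matrix.mul_apply, hWr] using this
  have hBrWi : Br * Wi = 0 := by
    ext i j
    have := congrArg Complex.im (hentry i j)
    simpa [Complex.im_sum, Matrix.mul_apply, hWi] using this
  -- extract ArᵀAr = 1 + BrᵀBr
  have hAA : Arᵀ * Ar = 1 + Brᵀ * Br := by
    ext i j
    have h0 : ((gᵀ * g) i j).re = ((1 : Matrix (Fin l) (Fin l) ℂ) i j).re := by rw [hg]
    simp only [Matrix.mul_apply, Complex.re_sum, Matrix.transpose_apply, Complex.mul_re] at h0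
    have h2 : ((1 : Matrix (Fin l) (Fin l) ℂ) i j).re = (1 : Matrix (Fin l) (Fin l) ℝ) i j := by
      by_cases hij : i = j <;> simp [Matrix.one_apply, hij]
    rw [h2] at h0
    simp only [Matrix.add_apply, Matrix.mul_apply, Matrix.transpose_apply, hAr, hBr,
      Matrix.of_apply, Finset.sum_sub_distrib] at h0 ⊢
    linarith
  -- Gram condition
  set X : Matrix (Fin l) (Fin n ⊕ Fin n) ℝ := Matrix.fromCols Wr Wi with hX
  have hBrX : Br * X = 0 := by
    rw [hX, Matrix.mul_fromCols, hBrWr, hBrWi]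
    ext i (j | j) <;> simp [Matrix.fromCols]
  have hgram : Xᵀ * X = (Ar * X)ᵀ * (Ar * X) := by
    rw [Matrix.transpose_mul, Matrix.mul_assoc, ← Matrix.mul_assoc Arᵀ, hAA]
    rw [Matrix.add_mul, Matrix.one_mul, Matrix.mul_add, Matrix.mul_assoc Brᵀ,
      ← Matrix.mul_assoc Xᵀ Brᵀ, ← Matrix.transpose_mul, hBrX]
    simp
  obtain ⟨Q, hQ1, hQX⟩ := exists_orthogonal_of_gram_eq X (Ar * X) hgram
  have hQcols : Q * Wr = Ar * Wr ∧ Q * Wi = Ar * Wi := by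
    rw [hX, Matrix.mul_fromCols, Matrix.mul_fromCols] at hQX
    exact Matrix.fromCols_inj hQX
  set g₁ : Matrix (Fin l) (Fin l) ℂ := Q.map (Complex.ofRealHom) with hg₁
  have hg₁im : ∀ i j, (g₁ i j).im = 0 := by intro i j; simp [hg₁]
  have hg₁o : g₁ᵀ * g₁ = 1 := by
    rw [hg₁, ← Matrix.transpose_map, ← Matrix.map_mul, hQ1,
      Matrix.map_one _ (map_zero _) (map_one _)]
  have hg₁o' : g₁ * g₁ᵀ = 1 := mul_eq_one_comm.mp hg₁o
  have hg₁W : g₁ * W = g * W := by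
    ext i j
    apply Complex.ext
    · have e1 : ((g₁ * W) i j).re = (Q * Wr) i j := by
        simp [hg₁, Matrix.mul_apply, Complex.re_sum, hWr]
      have e2 : ((g * W) i j).re = (Ar * Wr) i j - (Br * Wi) i j := by
        simp [Matrix.mul_apply, Complex.re_sum, Complex.mul_re, hAr, hBr, hWr, hWi,
          Finset.sum_sub_distrib]
      rw [e1, e2, hQcols.1, hBrWi]
      simp
    · have e1 : ((g₁ * W) i j).im = (Q * Wi) i j := by
        simp [hg₁, Matrix.mul_apply, Complex.im_sum, hWi]
      have e2 : ((g * W) i j).im = (Ar * Wi) i j + (Br * Wr) i j := by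
        simp [Matrix.mul_apply, Complex.im_sum, Complex.mul_im, hAr, hBr, hWr, hWi,
          Finset.sum_add_distrib]
      rw [e1, e2, hQcols.2, hBrWr]
      simp
  refine ⟨g₁, g₁ᵀ * g, hg₁im, hg₁o, ?_, ?_, ?_⟩
  · rw [Matrix.transpose_mul, Matrix.transpose_transpose, Matrix.mul_assoc,
      ← Matrix.mul_assoc g₁ g₁ᵀ, hg₁o', Matrix.one_mul, hg]
  · rw [Matrix.mul_assoc, ← hg₁W, ← Matrix.mul_assoc, hg₁o, Matrix.one_mul]
  · rw [← Matrix.mul_assoc, hg₁o', Matrix.one_mul]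

/-- Lemma 4.2 (ii): if `W W*` is real, then `f_W(g) = f_W(e)` for `g ∈ O_l(ℂ)` if and
only if `g = g₁ · s` with `g₁ ∈ O_l(ℝ)` and `s ∈ Stab(W) = {s ∈ O_l(ℂ) ∣ sW = W}`. -/
theorem kempfNess_equality_iff {l n : ℕ} (W : Matrix (Fin l) (Fin n) ℂ)
    (hW : ∀ i j, ((W * Wᴴ) i j).im = 0)
    (g : Matrix (Fin l) (Fin l) ℂ) (hg : gᵀ * g = 1) :
    ((g * W)ᴴ * (g * W)).trace = (Wᴴ * W).trace ↔
      ∃ g₁ s : Matrix (Fin l) (Fin l) ℂ,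
        (∀ i j, (g₁ i j).im = 0) ∧ g₁ᵀ * g₁ = 1 ∧
        sᵀ * s = 1 ∧ s * W = W ∧ g = g₁ * s := by
  constructor
  · intro hEq
    exact stageC W g hg (stageB W hW g hg hEq)
  · rintro ⟨g₁, s, him, hg₁, hs, hsW, rfl⟩
    have hg₁H : g₁ᴴ = g₁ᵀ := by
      ext i j
      rw [Matrix.conjTranspose_apply, Matrix.transpose_apply]
      exact Complex.conj_eq_iff_im.mpr (him j i)
    have : g₁ * s * W = g₁ * W := by rw [Matrix.mul_assoc, hsW]
    rw [this, Matrix.conjTranspose_mul, hg₁H, Matrix.mul_assoc,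
      ← Matrix.mul_assoc g₁ᵀ g₁ W, hg₁, Matrix.one_mul]
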